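/- Let A : ℝ → ℝ be four times differentiable and θ ∈ ℝ. Define E₁ = 36A⁵ − 900A³A' + 2000A²A'' + 625A(4(A'² + θ) − 3A''') + 625(−5A'A'' + A'''') and E₂ = 9A⁴ − 180A²A' + 275AA'' + 25(7A'² + 25θ − 5A'''). Then E₁(x) = 4A(x)E₂(x) − 5E₂'(x) for all x. In particular, if E₂ vanishes identically then so does E₁. -/

import Mathlib

/-- For `A` four times differentiable and the expressions
`E₁ = 36A⁵ - 900A³A' + 2000A²A'' + 625A(4(A'² + θ) - 3A''') + 625(-5A'A'' + A'''')`
and `E₂ = 9A⁴ - 180A²A' + 275AA'' + 25(7A'² + 25θ - 5A''')`, one has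
`E₁ = 4AE₂ - 5E₂'`; in particular `E₂ ≡ 0` implies `E₁ ≡ 0`. -/
theorem stmt11 (A : ℝ → ℝ) (θ : ℝ)
    (hA : Differentiable ℝ A)
    (hA1 : Differentiable ℝ (deriv A))
    (hA2 : Differentiable ℝ (deriv (deriv A)))
    (hA3 : Differentiable ℝ (deriv (deriv (deriv A))))
    (E₁ E₂ : ℝ → ℝ)
    (hE₁ : ∀ x : ℝ, E₁ x =
      36 * (A x) ^ 5 - 900 * (A x) ^ 3 * deriv A x
        + 2000 * (A x) ^ 2 * deriv (deriv A) x
        + 625 * (A x) * (4 * ((deriv A x) ^ 2 + θ) - 3 * deriv (deriv (deriv A)) x)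
        + 625 * (-5 * deriv A x * deriv (deriv A) x
            + deriv (deriv (deriv (deriv A))) x))
    (hE₂ : ∀ x : ℝ, E₂ x =
      9 * (A x) ^ 4 - 180 * (A x) ^ 2 * deriv A x + 275 * (A x) * deriv (deriv A) x
        + 25 * (7 * (deriv A x) ^ 2 + 25 * θ - 5 * deriv (deriv (deriv A)) x)) :
    (∀ x : ℝ, E₁ x = 4 * A x * E₂ x - 5 * deriv E₂ x) ∧
    ((∀ x : ℝ, E₂ x = 0) → ∀ x : ℝ, E₁ x = 0) := by
  have hfun : E₂ = fun x => 9 * (A x) ^ 4 - 180 * (A x) ^ 2 * deriv A x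
      + 275 * (A x) * deriv (deriv A) x
      + 25 * (7 * (deriv A x) ^ 2 + 25 * θ - 5 * deriv (deriv (deriv A)) x) := funext hE₂
  have hd : ∀ x : ℝ, deriv E₂ x =
      9 * (4 * A x ^ 3 * deriv A x)
        - 180 * (2 * A x ^ 1 * deriv A x * deriv A x + A x ^ 2 * deriv (deriv A) x)
        + 275 * (deriv A x * deriv (deriv A) x + A x * deriv (deriv (deriv A)) x)
        + 25 * (7 * (2 * deriv A x ^ 1 * deriv (deriv A) x)
            - 5 * deriv (deriv (deriv (deriv A))) x) := by
    intro x
    have hAx : HasDerivAt A (deriv A x) x := (hA x).hasDerivAt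
    have h1x : HasDerivAt (deriv A) (deriv (deriv A) x) x := (hA1 x).hasDerivAt
    have h2x : HasDerivAt (deriv (deriv A)) (deriv (deriv (deriv A)) x) x := (hA2 x).hasDerivAt
    have h3x : HasDerivAt (deriv (deriv (deriv A))) (deriv (deriv (deriv (deriv A))) x) x :=
      (hA3 x).hasDerivAt
    have H : HasDerivAt (fun x => 9 * (A x) ^ 4 - 180 * (A x) ^ 2 * deriv A x
        + 275 * (A x) * deriv (deriv A) x
        + 25 * (7 * (deriv A x) ^ 2 + 25 * θ - 5 * deriv (deriv (deriv A)) x))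
        (9 * (4 * A x ^ 3 * deriv A x)
          - 180 * (2 * A x ^ 1 * deriv A x * deriv A x + A x ^ 2 * deriv (deriv A) x)
          + 275 * (deriv A x * deriv (deriv A) x + A x * deriv (deriv (deriv A)) x)
          + 25 * (7 * (2 * deriv A x ^ 1 * deriv (deriv A) x)
              - 5 * deriv (deriv (deriv (deriv A))) x)) x := by
      have p4 : HasDerivAt (fun x => (A x) ^ 4) (4 * A x ^ 3 * deriv A x) x := by
        simpa using hAx.fun_pow 4
      have p2 : HasDerivAt (fun x => (A x) ^ 2 * deriv A x)
          (2 * A x ^ 1 * deriv A x * deriv A x + A x ^ 2 * deriv (deriv A) x) x :=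
        (hAx.pow 2).mul h1x
      have p3 : HasDerivAt (fun x => (A x) * deriv (deriv A) x)
          (deriv A x * deriv (deriv A) x + A x * deriv (deriv (deriv A)) x) x := hAx.mul h2x
      have p5 : HasDerivAt (fun x => 7 * (deriv A x) ^ 2 + 25 * θ - 5 * deriv (deriv (deriv A)) x)
          (7 * (2 * deriv A x ^ 1 * deriv (deriv A) x) - 5 * deriv (deriv (deriv (deriv A))) x) x :=
        (((h1x.pow 2).const_mul 7).add_const (25 * θ)).sub (h3x.const_mul 5)
      simpa only [mul_assoc] using
        (((p4.const_mul 9).fun_sub (p2.const_mul 180)).fun_add (p3.const_mul 275)).fun_add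
          (p5.const_mul 25)
    rw [hfun]
    exact H.deriv
  have hmain : ∀ x : ℝ, E₁ x = 4 * A x * E₂ x - 5 * deriv E₂ x := by
    intro x
    rw [hE₁, hE₂, hd]
    ring
  refine ⟨hmain, fun h x => ?_⟩
  have hz : E₂ = fun _ => (0 : ℝ) := funext h
  rw [hmain x, h x, hz]
  simp
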